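/- For normal distributions P₁ = N(μ₁, σ₁²) and P₂ = N(μ₂, σ₂²) with σ₂ ≤ σ₁, d_W(P₁,P₂) ≤ |(σ₁²/σ₂²) μ₂ − μ₁| + ((σ₁²/σ₂²) − 1) √(σ₂² + μ₂²). -/

import Mathlib

open MeasureTheory ProbabilityTheory Real
open scoped NNReal ENNReal

namespace WGauss

lemma integrable_sq_exp {b : ℝ} (hb : 0 < b) :
    Integrable (fun x : ℝ => x ^ 2 * Real.exp (-b * x ^ 2)) := by
  have h1 : Integrable (fun x : ℝ => (2 / b) * Real.exp (-(b / 2) * x ^ 2)) :=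
    (integrable_exp_neg_mul_sq (by linarith)).const_mul _
  refine h1.mono' ?_ (Filter.Eventually.of_forall fun x => ?_)
  · exact ((continuous_pow 2).mul (by continuity)).aestronglyMeasurable
  · have hexp : (0:ℝ) < Real.exp ((b/2) * x ^ 2) := Real.exp_pos _
    have key : x ^ 2 / Real.exp ((b/2) * x ^ 2) ≤ 2 / b := by
      rw [div_le_div_iff₀ hexp hb]
      nlinarith [Real.add_one_le_exp ((b/2) * x ^ 2)]
    have hsplit : Real.exp (-b * x ^ 2)
        = Real.exp (-(b/2) * x ^ 2) / Real.exp ((b/2) * x ^ 2) := by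
      rw [← Real.exp_sub]; congr 1; ring
    rw [Real.norm_eq_abs, abs_of_nonneg (by positivity), hsplit]
    calc x ^ 2 * (Real.exp (-(b/2) * x ^ 2) / Real.exp ((b/2) * x ^ 2))
        = (x ^ 2 / Real.exp ((b/2) * x ^ 2)) * Real.exp (-(b/2) * x ^ 2) := by ring
      _ ≤ 2 / b * Real.exp (-(b/2) * x ^ 2) :=
          mul_le_mul_of_nonneg_right key (Real.exp_pos _).le

lemma integral_sq_exp {b : ℝ} (hb : 0 < b) :
    ∫ x : ℝ, x ^ 2 * Real.exp (-b * x ^ 2) = Real.sqrt (π / b) / (2 * b) := by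
  have hint := integrable_sq_exp hb
  have hIoi : ∫ x in Set.Ioi (0:ℝ), x ^ 2 * Real.exp (-b * x ^ 2)
      = b ^ (-(3:ℝ)/2) * (1/2) * Real.Gamma (3/2) := by
    have h := integral_rpow_mul_exp_neg_mul_rpow (p := 2) (q := 2) (b := b)
      (by norm_num) (by norm_num) hb
    rw [show ((2:ℝ)+1)/2 = 3/2 by norm_num, show (-((2:ℝ)+1)/2) = -(3:ℝ)/2 by norm_num] at h
    rw [← h]
    refine setIntegral_congr_fun measurableSet_Ioi fun x hx => ?_
    norm_num [Real.rpow_natCast]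
  have hGamma : Real.Gamma (3/2) = Real.sqrt π / 2 := by
    have h := Real.Gamma_add_one (s := 1/2) (by norm_num)
    rw [show (1:ℝ)/2 + 1 = 3/2 by norm_num] at h
    rw [h, Real.Gamma_one_half_eq]; ring
  have hsym : ∫ x in Set.Iic (0:ℝ), x ^ 2 * Real.exp (-b * x ^ 2)
      = ∫ x in Set.Ioi (0:ℝ), x ^ 2 * Real.exp (-b * x ^ 2) := by
    rw [show (0:ℝ) = -0 by norm_num, ← integral_comp_neg_Ioi]
    simp
  have hsplit := intervalIntegral.integral_Iic_add_Ioi (b := (0:ℝ)) (μ := volume)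
    hint.integrableOn hint.integrableOn
  have hb2 : b ^ (-(3:ℝ)/2) = (Real.sqrt b)⁻¹ * b⁻¹ := by
    rw [show (-(3:ℝ)/2) = (-(1/2)) + (-1) by norm_num, Real.rpow_add hb,
      Real.rpow_neg_one, Real.rpow_neg hb.le, ← Real.sqrt_eq_rpow]
  have hsb : Real.sqrt b ≠ 0 := by positivity
  rw [← hsplit, hsym, hIoi, hGamma, hb2, Real.sqrt_div Real.pi_pos.le]
  field_simp
  ring

end WGauss

namespace WGauss2
open WGauss

variable {v : ℝ≥0}

lemma integral_gaussianReal_eq (μ : ℝ) (hv : v ≠ 0) (g : ℝ → ℝ) :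
    ∫ x, g x ∂(gaussianReal μ v) = ∫ x, gaussianPDFReal μ v x * g x := by
  rw [gaussianReal_of_var_ne_zero _ hv, gaussianPDF_def]
  rw [show (fun x => ENNReal.ofReal (gaussianPDFReal μ v x))
      = (fun x => ((gaussianPDFReal μ v x).toNNReal : ℝ≥0∞)) from rfl]
  rw [integral_withDensity_eq_integral_smul ((measurable_gaussianPDFReal μ v).real_toNNReal) g]
  congr 1
  ext x
  rw [NNReal.smul_def, Real.coe_toNNReal _ (gaussianPDFReal_nonneg μ v x), smul_eq_mul]

lemma integrable_gaussianReal_iff (μ : ℝ) (hv : v ≠ 0) (g : ℝ → ℝ) :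
    Integrable g (gaussianReal μ v) ↔
      Integrable (fun x => gaussianPDFReal μ v x * g x) volume := by
  rw [gaussianReal_of_var_ne_zero _ hv, gaussianPDF_def]
  rw [show (fun x => ENNReal.ofReal (gaussianPDFReal μ v x))
      = (fun x => ((gaussianPDFReal μ v x).toNNReal : ℝ≥0∞)) from rfl]
  rw [integrable_withDensity_iff_integrable_smul ((measurable_gaussianPDFReal μ v).real_toNNReal)]
  constructor <;> intro hI <;> refine hI.congr (Filter.Eventually.of_forall fun x => ?_) <;>
    simp only [NNReal.smul_def, Real.coe_toNNReal _ (gaussianPDFReal_nonneg μ v x), smul_eq_mul]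

lemma pdf_zero_eq (hv : v ≠ 0) :
    gaussianPDFReal 0 v = fun x => (Real.sqrt (2*π*v))⁻¹ * Real.exp (-(2*(v:ℝ))⁻¹ * x^2) := by
  ext x
  rw [gaussianPDFReal]
  congr 1
  rw [sub_zero]
  ring

lemma hvpos (hv : v ≠ 0) : (0:ℝ) < (v : ℝ) :=
  lt_of_le_of_ne (v.coe_nonneg) (by exact_mod_cast (Ne.symm hv))

lemma integrable_f0 (μ : ℝ) (hv : v ≠ 0) :
    Integrable (fun x => gaussianPDFReal 0 v x * (x + μ)^2) := by
  have hb : (0:ℝ) < (2*(v:ℝ))⁻¹ := by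
    have := hvpos hv; positivity
  have i1 := integrable_sq_exp hb
  have i2 := integrable_mul_exp_neg_mul_sq hb
  have i3 := integrable_exp_neg_mul_sq hb
  have heq : (fun x => gaussianPDFReal 0 v x * (x + μ)^2)
      = fun x => (Real.sqrt (2*π*v))⁻¹ * (x^2 * Real.exp (-(2*(v:ℝ))⁻¹ * x^2))
        + ((Real.sqrt (2*π*v))⁻¹ * (2*μ)) * (x * Real.exp (-(2*(v:ℝ))⁻¹ * x^2))
        + ((Real.sqrt (2*π*v))⁻¹ * μ^2) * Real.exp (-(2*(v:ℝ))⁻¹ * x^2) := by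
    ext x
    rw [pdf_zero_eq hv]
    ring
  rw [heq]
  exact ((i1.const_mul _).add (i2.const_mul _)).add (i3.const_mul _)

lemma integral_odd_exp {b : ℝ} : ∫ x : ℝ, x * Real.exp (-b * x^2) = 0 := by
  have h2 := integral_neg_eq_self (fun x : ℝ => x * Real.exp (-b * x^2)) volume
  simp only [neg_sq, neg_mul, integral_neg] at h2 ⊢
  linarith

lemma integral_sq_pdf (μ : ℝ) (hv : v ≠ 0) :
    ∫ x : ℝ, gaussianPDFReal μ v x * x ^ 2 = (v : ℝ) + μ^2 := by
  have hv0 := hvpos hv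
  have hb : (0:ℝ) < (2*(v:ℝ))⁻¹ := by positivity
  have hshift := integral_add_right_eq_self (μ := volume)
    (fun x => gaussianPDFReal μ v x * x ^ 2) μ
  have hcomp : (fun x => gaussianPDFReal μ v (x + μ) * (x + μ) ^ 2)
      = fun x => gaussianPDFReal 0 v x * (x + μ)^2 := by
    ext x
    rw [gaussianPDFReal_add, sub_self]
  rw [← hshift]
  show ∫ x : ℝ, gaussianPDFReal μ v (x + μ) * (x + μ) ^ 2 = (v : ℝ) + μ^2
  rw [hcomp]
  have i1 := integrable_sq_exp hb
  have i2 := integrable_mul_exp_neg_mul_sq hb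
  have i3 := integrable_exp_neg_mul_sq hb
  have heq : (fun x => gaussianPDFReal 0 v x * (x + μ)^2)
      = fun x => (Real.sqrt (2*π*v))⁻¹ * (x^2 * Real.exp (-(2*(v:ℝ))⁻¹ * x^2))
        + ((Real.sqrt (2*π*v))⁻¹ * (2*μ)) * (x * Real.exp (-(2*(v:ℝ))⁻¹ * x^2))
        + ((Real.sqrt (2*π*v))⁻¹ * μ^2) * Real.exp (-(2*(v:ℝ))⁻¹ * x^2) := by
    ext x
    rw [pdf_zero_eq hv]
    ring
  rw [heq]
  have I1 : Integrable (fun x : ℝ => (Real.sqrt (2*π*(v:ℝ)))⁻¹ * (x^2 * Real.exp (-(2*(v:ℝ))⁻¹ * x^2))) volume := i1.const_mul _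
  have I2 : Integrable (fun x : ℝ => ((Real.sqrt (2*π*(v:ℝ)))⁻¹ * (2*μ)) * (x * Real.exp (-(2*(v:ℝ))⁻¹ * x^2))) volume := i2.const_mul _
  have I3 : Integrable (fun x : ℝ => ((Real.sqrt (2*π*(v:ℝ)))⁻¹ * μ^2) * Real.exp (-(2*(v:ℝ))⁻¹ * x^2)) volume := i3.const_mul _
  have I12 : Integrable (fun x : ℝ => (Real.sqrt (2*π*(v:ℝ)))⁻¹ * (x^2 * Real.exp (-(2*(v:ℝ))⁻¹ * x^2)) + ((Real.sqrt (2*π*(v:ℝ)))⁻¹ * (2*μ)) * (x * Real.exp (-(2*(v:ℝ))⁻¹ * x^2))) volume := I1.add I2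
  rw [integral_add I12 I3, integral_add I1 I2,
    integral_const_mul, integral_const_mul, integral_const_mul,
    integral_sq_exp hb, integral_odd_exp, integral_gaussian]
  have hpb : π / (2*(v:ℝ))⁻¹ = 2*π*v := by field_simp
  have h2b : (2 * (2*(v:ℝ))⁻¹) = (v:ℝ)⁻¹ := by field_simp
  rw [hpb, h2b]
  have hs : Real.sqrt (2*π*(v:ℝ)) ≠ 0 := ne_of_gt (Real.sqrt_pos.mpr (by positivity))
  have hv0' : (v:ℝ) ≠ 0 := ne_of_gt hv0
  field_simp
  ring

lemma integrable_sq_pdf (μ : ℝ) (hv : v ≠ 0) :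
    Integrable (fun x => gaussianPDFReal μ v x * x ^ 2) := by
  have h := (integrable_f0 μ hv).comp_sub_right μ
  refine h.congr (Filter.Eventually.of_forall fun x => ?_)
  simp only
  rw [gaussianPDFReal_sub, zero_add, sub_add_cancel]

lemma integrable_sq_gaussian (μ : ℝ) (hv : v ≠ 0) :
    Integrable (fun x => x ^ 2) (gaussianReal μ v) :=
  (integrable_gaussianReal_iff μ hv _).2 (integrable_sq_pdf μ hv)

lemma integral_sq_gaussian (μ : ℝ) (hv : v ≠ 0) :
    ∫ x, x ^ 2 ∂(gaussianReal μ v) = (v : ℝ) + μ^2 := by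
  rw [integral_gaussianReal_eq μ hv, integral_sq_pdf μ hv]

lemma integrable_abs_gaussian (μ : ℝ) (hv : v ≠ 0) :
    Integrable (fun x => |x|) (gaussianReal μ v) := by
  have h1 : Integrable (fun x : ℝ => (x^2 + 1)/2) (gaussianReal μ v) :=
    ((integrable_sq_gaussian μ hv).add (integrable_const 1)).div_const 2
  refine h1.mono' (continuous_abs.aestronglyMeasurable) (Filter.Eventually.of_forall fun x => ?_)
  rw [Real.norm_eq_abs, abs_abs]
  nlinarith [sq_nonneg (|x| - 1), sq_abs x]

lemma integrable_lipschitz {K : ℝ≥0} {h : ℝ → ℝ} (hh : LipschitzWith K h)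
    (μ : ℝ) (hv : v ≠ 0) : Integrable h (gaussianReal μ v) := by
  have h1 : Integrable (fun x : ℝ => |h 0| + (K:ℝ) * |x|) (gaussianReal μ v) :=
    (integrable_const _).add ((integrable_abs_gaussian μ hv).const_mul _)
  refine h1.mono' (hh.continuous.aestronglyMeasurable) (Filter.Eventually.of_forall fun x => ?_)
  have := hh.dist_le_mul x 0
  rw [Real.dist_eq, Real.dist_eq, sub_zero] at this
  rw [Real.norm_eq_abs]
  calc |h x| ≤ |h x - h 0| + |h 0| := by
        have := abs_add_le (h x - h 0) (h 0); simpa using this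
    _ ≤ (K:ℝ) * |x| + |h 0| := by linarith
    _ = |h 0| + (K:ℝ) * |x| := by ring

lemma abs_moment_le (μ : ℝ) (hv : v ≠ 0) :
    ∫ x, |x| ∂(gaussianReal μ v) ≤ Real.sqrt ((v:ℝ) + μ^2) := by
  have hv0 := hvpos hv
  set c := Real.sqrt ((v:ℝ) + μ^2) with hc
  have hcpos : 0 < c := Real.sqrt_pos.mpr (by positivity)
  have hcsq : c^2 = (v:ℝ) + μ^2 := Real.sq_sqrt (by positivity)
  have hintsq := integrable_sq_gaussian μ hv
  have hint2 : Integrable (fun x : ℝ => (x^2 + c^2)/(2*c)) (gaussianReal μ v) :=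
    (hintsq.add (integrable_const _)).div_const _
  have hmono : ∫ x, |x| ∂(gaussianReal μ v) ≤ ∫ x, (x^2 + c^2)/(2*c) ∂(gaussianReal μ v) := by
    refine integral_mono (integrable_abs_gaussian μ hv) hint2 fun x => ?_
    rw [le_div_iff₀ (by positivity)]
    nlinarith [sq_nonneg (|x| - c), sq_abs x]
  refine hmono.trans_eq ?_
  rw [integral_div, integral_add hintsq (integrable_const _), integral_sq_gaussian μ hv,
    integral_const, probReal_univ, one_smul, ← hcsq]
  field_simp
  ring

end WGauss2

open WGauss2 in
/-- For normals `N(μ₁,σ₁²)` and `N(μ₂,σ₂²)` with `σ₂ ≤ σ₁`,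
`d_W(P₁,P₂) ≤ |(σ₁²/σ₂²) μ₂ − μ₁| + ((σ₁²/σ₂²) − 1) √(σ₂² + μ₂²)`. -/
theorem wasserstein_gaussians_le
    (μ₁ μ₂ σ₁ σ₂ : ℝ) (hσ₂ : 0 < σ₂) (hle : σ₂ ≤ σ₁)
    (W : ℝ)
    (hW : IsLUB {d : ℝ | ∃ h : ℝ → ℝ, LipschitzWith 1 h ∧
        d = |(∫ x, h x ∂(gaussianReal μ₂ (σ₂ ^ 2).toNNReal))
             - ∫ x, h x ∂(gaussianReal μ₁ (σ₁ ^ 2).toNNReal)|} W) :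
    W ≤ |σ₁ ^ 2 / σ₂ ^ 2 * μ₂ - μ₁|
        + (σ₁ ^ 2 / σ₂ ^ 2 - 1) * Real.sqrt (σ₂ ^ 2 + μ₂ ^ 2) := by
  have hσ₁ : 0 < σ₁ := lt_of_lt_of_le hσ₂ hle
  set a : ℝ := σ₁ / σ₂ with ha_def
  have ha1 : 1 ≤ a := (one_le_div hσ₂).2 hle
  have ha0 : 0 < a := lt_of_lt_of_le one_pos ha1
  set b : ℝ := μ₁ - a * μ₂ with hb_def
  have hv₂ : ((σ₂ ^ 2).toNNReal : ℝ≥0) ≠ 0 := by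
    rw [ne_eq, Real.toNNReal_eq_zero, not_le]; positivity
  have hc2 : (((σ₂ ^ 2).toNNReal : ℝ≥0) : ℝ) = σ₂ ^ 2 := Real.coe_toNNReal _ (sq_nonneg _)
  have hmeas : Measurable (fun x : ℝ => a * x + b) := (measurable_id.const_mul a).add_const b
  have hμab : a * μ₂ + b = μ₁ := by rw [hb_def]; ring
  have hmap : (gaussianReal μ₂ (σ₂ ^ 2).toNNReal).map (fun x => a * x + b)
      = gaussianReal μ₁ (σ₁ ^ 2).toNNReal := by
    have hm1 : Measurable fun x : ℝ => x + b := by fun_prop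
    have hm2 : Measurable fun x : ℝ => a * x := by fun_prop
    have hcomp : (fun x : ℝ => a * x + b) = (fun x => x + b) ∘ (fun x => a * x) := rfl
    rw [hcomp, ← Measure.map_map hm1 hm2]
    rw [show (fun x : ℝ => a * x) = (a * ·) from rfl, gaussianReal_map_const_mul a,
      show (fun x : ℝ => x + b) = (· + b) from rfl, gaussianReal_map_add_const b, hμab]
    congr 1
    apply NNReal.coe_injective
    rw [NNReal.coe_mul, hc2, Real.coe_toNNReal _ (sq_nonneg σ₁), NNReal.coe_mk]
    rw [ha_def]
    field_simp
  set P₂ := gaussianReal μ₂ (σ₂ ^ 2).toNNReal with hP₂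
  set c : ℝ := Real.sqrt (σ₂ ^ 2 + μ₂ ^ 2) with hc_def
  have hc0 : 0 ≤ c := Real.sqrt_nonneg _
  have hμc : |μ₂| ≤ c := by
    rw [← Real.sqrt_sq_eq_abs, hc_def]
    exact Real.sqrt_le_sqrt (by nlinarith [sq_nonneg σ₂])
  have hmom : ∫ x, |x| ∂P₂ ≤ c := by
    have h := abs_moment_le μ₂ hv₂
    rw [hc2] at h
    exact h
  refine hW.2 fun d hd => ?_
  obtain ⟨h, hlip, rfl⟩ := hd
  have hI2 : Integrable h P₂ := integrable_lipschitz hlip μ₂ hv₂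
  have hg : LipschitzWith (Real.toNNReal a) (fun x : ℝ => a * x + b) := by
    apply LipschitzWith.of_dist_le_mul
    intro x y
    rw [Real.dist_eq, Real.dist_eq, show a * x + b - (a * y + b) = a * (x - y) by ring,
      abs_mul, abs_of_nonneg ha0.le, Real.coe_toNNReal _ ha0.le]
  have hI1 : Integrable (fun x => h (a * x + b)) P₂ :=
    integrable_lipschitz (hlip.comp hg) μ₂ hv₂
  have habs : Integrable (fun x => |x|) P₂ := integrable_abs_gaussian μ₂ hv₂
  have hInt1eq : ∫ x, h x ∂(gaussianReal μ₁ (σ₁ ^ 2).toNNReal) = ∫ x, h (a * x + b) ∂P₂ := by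
    rw [← hmap, integral_map hmeas.aemeasurable hlip.continuous.aestronglyMeasurable]
  have hdiff : (∫ x, h x ∂P₂) - ∫ x, h (a * x + b) ∂P₂
      = ∫ x, (h x - h (a * x + b)) ∂P₂ := (integral_sub hI2 hI1).symm
  have hptwise : ∀ x : ℝ, |h x - h (a * x + b)| ≤ (a - 1) * |x| + |b| := by
    intro x
    have h1 : |h x - h (a * x + b)| ≤ |x - (a * x + b)| := by
      have := hlip.dist_le_mul x (a * x + b)
      rwa [Real.dist_eq, Real.dist_eq, NNReal.coe_one, one_mul] at this
    refine h1.trans ?_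
    rw [show x - (a * x + b) = (1 - a) * x - b by ring]
    refine (abs_sub _ _).trans ?_
    rw [abs_mul, abs_of_nonpos (by linarith : 1 - a ≤ 0)]
    simp only [neg_sub]
    exact le_rfl
  have hbound : |∫ x, (h x - h (a * x + b)) ∂P₂| ≤ (a - 1) * (∫ x, |x| ∂P₂) + |b| := by
    have h1 : |∫ x, (h x - h (a * x + b)) ∂P₂| ≤ ∫ x, |h x - h (a * x + b)| ∂P₂ := by
      simpa [Real.norm_eq_abs] using
        norm_integral_le_integral_norm (μ := P₂) (fun x => h x - h (a * x + b))
    refine h1.trans ?_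
    have h2 : ∫ x, |h x - h (a * x + b)| ∂P₂ ≤ ∫ x, ((a - 1) * |x| + |b|) ∂P₂ :=
        integral_mono (hI2.sub hI1).abs ((habs.const_mul _).add (integrable_const _))
          (fun x => hptwise x)
    refine h2.trans_eq ?_
    rw [integral_add (habs.const_mul _) (integrable_const _), integral_const_mul,
      integral_const, probReal_univ, one_smul]
  have hE0 : 0 ≤ ∫ x, |x| ∂P₂ := integral_nonneg fun x => abs_nonneg x
  have key : |b| ≤ |a ^ 2 * μ₂ - μ₁| + a * (a - 1) * |μ₂| := by
    rw [hb_def, show μ₁ - a * μ₂ = -(a ^ 2 * μ₂ - μ₁) + (a ^ 2 - a) * μ₂ by ring]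
    refine (abs_add_le _ _).trans ?_
    rw [abs_neg, abs_mul, abs_of_nonneg (by nlinarith : (0:ℝ) ≤ a ^ 2 - a)]
    have : (a ^ 2 - a) = a * (a - 1) := by ring
    rw [this]
  have ha2 : σ₁ ^ 2 / σ₂ ^ 2 = a ^ 2 := (div_pow σ₁ σ₂ 2).symm
  rw [hInt1eq, hdiff, ha2]
  refine le_trans hbound ?_
  have hm1 : (a - 1) * (∫ x, |x| ∂P₂) ≤ (a - 1) * c :=
    mul_le_mul_of_nonneg_left hmom (by linarith)
  have hm2 : a * (a - 1) * |μ₂| ≤ a * (a - 1) * c :=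
    mul_le_mul_of_nonneg_left hμc (by nlinarith)
  nlinarith [key, hm1, hm2]
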